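/- The Log-Cholesky distance d_LC(A,B) = (‖⌊chol(A)⌋ − ⌊chol(B)⌋‖_F² + ‖log D(chol(A)) − log D(chol(B))‖_F²)^{1/2} defines a metric on the m×m symmetric positive definite matrices; in particular d_LC(A,B) = 0 implies A = B. -/

import Mathlib

open Matrix

/-- Frobenius norm of a real matrix. -/
noncomputable def frobNorm {m : ℕ} (A : Matrix (Fin m) (Fin m) ℝ) : ℝ :=
  Real.sqrt (∑ i, ∑ j, (A i j) ^ 2)

/-- Strictly lower triangular part of a matrix. -/
def strictLower {m : ℕ} (L : Matrix (Fin m) (Fin m) ℝ) : Matrix (Fin m) (Fin m) ℝ :=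
  Matrix.of fun i j => if j < i then L i j else 0

/-- Diagonal matrix whose entries are the logarithms of the diagonal of `L`. -/
noncomputable def logDiag {m : ℕ} (L : Matrix (Fin m) (Fin m) ℝ) :
    Matrix (Fin m) (Fin m) ℝ :=
  Matrix.diagonal fun i => Real.log (L i i)

/-- The Log-Cholesky distance. -/
noncomputable def dLC {m : ℕ} (chol : Matrix (Fin m) (Fin m) ℝ → Matrix (Fin m) (Fin m) ℝ)
    (A B : Matrix (Fin m) (Fin m) ℝ) : ℝ :=
  Real.sqrt (frobNorm (strictLower (chol A) - strictLower (chol B)) ^ 2 +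
    frobNorm (logDiag (chol A) - logDiag (chol B)) ^ 2)

/-- Auxiliary embedding into Euclidean space. -/
noncomputable def lcEmbed {m : ℕ}
    (chol : Matrix (Fin m) (Fin m) ℝ → Matrix (Fin m) (Fin m) ℝ)
    (A : Matrix (Fin m) (Fin m) ℝ) :
    EuclideanSpace ℝ ((Fin m × Fin m) ⊕ (Fin m × Fin m)) :=
  WithLp.toLp 2 (fun x : (Fin m × Fin m) ⊕ (Fin m × Fin m) =>
    Sum.elim (fun p : Fin m × Fin m => strictLower (chol A) p.1 p.2)
    (fun p : Fin m × Fin m => logDiag (chol A) p.1 p.2) x)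

lemma frobNorm_sq {m : ℕ} (A : Matrix (Fin m) (Fin m) ℝ) :
    frobNorm A ^ 2 = ∑ i, ∑ j, (A i j) ^ 2 := by
  apply Real.sq_sqrt
  positivity

lemma dLC_eq_dist {m : ℕ}
    (chol : Matrix (Fin m) (Fin m) ℝ → Matrix (Fin m) (Fin m) ℝ)
    (A B : Matrix (Fin m) (Fin m) ℝ) :
    dLC chol A B = dist (lcEmbed chol A) (lcEmbed chol B) := by
  rw [dLC, EuclideanSpace.dist_eq, frobNorm_sq, frobNorm_sq]
  congr 1
  rw [Fintype.sum_sum_type]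
  congr 1
  · rw [Fintype.sum_prod_type]
    simp [lcEmbed, Real.dist_eq, sq_abs]
  · rw [Fintype.sum_prod_type]
    simp [lcEmbed, Real.dist_eq, sq_abs]

/-- The Log-Cholesky distance is a metric on the symmetric positive definite
matrices; in particular `d_LC(A,B) = 0` implies `A = B`.  Here `chol` is any map
assigning to each SPD matrix its (unique) lower-triangular Cholesky factor with
positive diagonal. -/
theorem log_cholesky_distance_is_metric {m : ℕ}
    (chol : Matrix (Fin m) (Fin m) ℝ → Matrix (Fin m) (Fin m) ℝ)
    (hlow : ∀ A : Matrix (Fin m) (Fin m) ℝ, A.PosDef → ∀ i j, i < j → chol A i j = 0)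
    (hdiag : ∀ A : Matrix (Fin m) (Fin m) ℝ, A.PosDef → ∀ i, 0 < chol A i i)
    (hfact : ∀ A : Matrix (Fin m) (Fin m) ℝ, A.PosDef → A = chol A * (chol A)ᵀ) :
    (∀ A B : Matrix (Fin m) (Fin m) ℝ, A.PosDef → B.PosDef → 0 ≤ dLC chol A B) ∧
    (∀ A B : Matrix (Fin m) (Fin m) ℝ, A.PosDef → B.PosDef →
        dLC chol A B = dLC chol B A) ∧
    (∀ A B C : Matrix (Fin m) (Fin m) ℝ, A.PosDef → B.PosDef → C.PosDef →
        dLC chol A C ≤ dLC chol A B + dLC chol B C) ∧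
    (∀ A B : Matrix (Fin m) (Fin m) ℝ, A.PosDef → B.PosDef →
        (dLC chol A B = 0 ↔ A = B)) := by
  refine ⟨fun A B _ _ => ?_, fun A B _ _ => ?_, fun A B C _ _ _ => ?_, fun A B hA hB => ?_⟩
  · rw [dLC_eq_dist]; exact dist_nonneg
  · rw [dLC_eq_dist, dLC_eq_dist]; exact dist_comm _ _
  · rw [dLC_eq_dist, dLC_eq_dist, dLC_eq_dist]; exact dist_triangle _ _ _
  · rw [dLC_eq_dist, dist_eq_zero]
    constructor
    · intro h
      have hc : chol A = chol B := by
        ext i j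
        rcases lt_trichotomy j i with hji | hji | hji
        · have := congrFun (congrArg WithLp.ofLp h) (Sum.inl (i, j))
          simpa [lcEmbed, strictLower, hji] using this
        · subst hji
          have := congrFun (congrArg WithLp.ofLp h) (Sum.inr (j, j))
          simp [lcEmbed, logDiag] at this
          have := congrArg Real.exp this
          rwa [Real.exp_log (hdiag A hA j), Real.exp_log (hdiag B hB j)] at this
        · rw [hlow A hA i j hji, hlow B hB i j hji]
      rw [hfact A hA, hfact B hB, hc]
    · intro h
      subst h
      rfl
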